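/- Let F be the free group on generators x_1, x_2, x_3, and let σ_1 and σ_2 be the automorphisms of F determined by σ_1 : x_1 ↦ x_1 x_2 x_1^{−1}, x_2 ↦ x_1, x_3 ↦ x_3, and σ_2 : x_1 ↦ x_1, x_2 ↦ x_2 x_3 x_2^{−1}, x_3 ↦ x_2. Let n_1, …, n_k (k ≥ 2) be integers whose pairwise differences n_i − n_j have greatest common divisor 1. Let N be the normal closure in F of the set of elements ((σ_1^{n_i} ∘ σ_2 ∘ σ_1^{−n_i})(x_j))·x_j^{−1} for 1 ≤ i ≤ k and 1 ≤ j ≤ 3. Then in the quotient group G = F/N the images of x_1, x_2 and x_3 coincide; in particular, G is cyclic. -/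

import Mathlib

open FreeGroup

/-- The free group on three generators `x₁, x₂, x₃`. -/
abbrev F3 := FreeGroup (Fin 3)

def x1 : F3 := of 0
def x2 : F3 := of 1
def x3 : F3 := of 2

/-- The Artin generator `σ₁` as an endomorphism of `F3`:
`x₁ ↦ x₁x₂x₁⁻¹, x₂ ↦ x₁, x₃ ↦ x₃`. -/
def s1f : F3 →* F3 := lift ![x1 * x2 * x1⁻¹, x1, x3]

/-- The inverse of `σ₁`: `x₁ ↦ x₂, x₂ ↦ x₂⁻¹x₁x₂, x₃ ↦ x₃`. -/
def s1inv : F3 →* F3 := lift ![x2, x2⁻¹ * x1 * x2, x3]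

/-- The Artin generator `σ₂` as an endomorphism of `F3`:
`x₁ ↦ x₁, x₂ ↦ x₂x₃x₂⁻¹, x₃ ↦ x₂`. -/
def s2f : F3 →* F3 := lift ![x1, x2 * x3 * x2⁻¹, x2]

/-- The inverse of `σ₂`: `x₁ ↦ x₁, x₂ ↦ x₃, x₃ ↦ x₃⁻¹x₂x₃`. -/
def s2inv : F3 →* F3 := lift ![x1, x3, x3⁻¹ * x2 * x3]

/-- `σ₁` as an automorphism of `F3`. -/
def sigma1 : MulAut F3 :=
  MonoidHom.toMulEquiv s1f s1inv
    (by
      ext i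
      fin_cases i <;>
        simp [s1f, s1inv, x1, x2, x3] <;> group)
    (by
      ext i
      fin_cases i <;>
        simp [s1f, s1inv, x1, x2, x3] <;> group)

/-- `σ₂` as an automorphism of `F3`. -/
def sigma2 : MulAut F3 :=
  MonoidHom.toMulEquiv s2f s2inv
    (by
      ext i
      fin_cases i <;>
        simp [s2f, s2inv, x1, x2, x3] <;> group)
    (by
      ext i
      fin_cases i <;>
        simp [s2f, s2inv, x1, x2, x3] <;> group)

/-- The braid relations: each `mᵢ = σ₁^{nᵢ} σ₂ σ₁^{-nᵢ}` acts trivially on each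
generator. -/
def rels (k : ℕ) (n : Fin k → ℤ) : Set F3 :=
  {g | ∃ (i : Fin k) (j : Fin 3),
    g = ((sigma1 ^ (n i)) * sigma2 * (sigma1 ^ (-(n i)))) (of j) * (of j)⁻¹}


/-! ### Auxiliary lemmas -/

def cc : F3 := x1 * x2

lemma sigma1_x1 : sigma1 x1 = x1 * x2 * x1⁻¹ := by
  simp [sigma1, MonoidHom.toMulEquiv, s1f, x1, x2, x3]

lemma sigma1_x2 : sigma1 x2 = x1 := by
  simp [sigma1, MonoidHom.toMulEquiv, s1f, x1, x2, x3]

lemma sigma1_x3 : sigma1 x3 = x3 := by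
  simp [sigma1, MonoidHom.toMulEquiv, s1f, x1, x2, x3]

lemma sigma2_x3 : sigma2 x3 = x2 := by
  simp [sigma2, MonoidHom.toMulEquiv, s2f, x1, x2, x3]

lemma sigma1_cc : sigma1 cc = cc := by
  rw [cc, _root_.map_mul, sigma1_x1, sigma1_x2]; group

lemma sigma1_sq_x1 : (sigma1 ^ (2:ℤ)) x1 = cc * x1 * cc⁻¹ := by
  have h2 : (sigma1 ^ (2:ℤ)) = sigma1 * sigma1 := by
    rw [show (2:ℤ) = 1 + 1 by norm_num, zpow_add, zpow_one]
  rw [h2, MulAut.mul_apply, sigma1_x1, _root_.map_mul, _root_.map_mul, _root_.map_inv,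
    sigma1_x1, sigma1_x2, cc]
  group

lemma sigma1_sq_x2 : (sigma1 ^ (2:ℤ)) x2 = cc * x2 * cc⁻¹ := by
  have h2 : (sigma1 ^ (2:ℤ)) = sigma1 * sigma1 := by
    rw [show (2:ℤ) = 1 + 1 by norm_num, zpow_add, zpow_one]
  rw [h2, MulAut.mul_apply, sigma1_x2, sigma1_x1, cc]
  group

lemma sigma1_sq_cc : (sigma1 ^ (2:ℤ)) cc = cc := by
  have h2 : (sigma1 ^ (2:ℤ)) = sigma1 * sigma1 := by
    rw [show (2:ℤ) = 1 + 1 by norm_num, zpow_add, zpow_one]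
  rw [h2, MulAut.mul_apply, sigma1_cc, sigma1_cc]

lemma sigma1_zpow_x3 : ∀ m : ℤ, (sigma1 ^ m) x3 = x3 := by
  intro m
  induction m using Int.induction_on with
  | zero => simp
  | succ i ih =>
      rw [zpow_add, zpow_one, MulAut.mul_apply, sigma1_x3, ih]
  | pred i ih =>
      rw [show (-(i:ℤ)-1) = (-1) + (-(i:ℤ)) by ring, zpow_add, MulAut.mul_apply, ih,
        zpow_neg_one]
      rw [show ((sigma1⁻¹ : MulAut F3) x3) = sigma1.symm x3 from rfl]
      rw [MulEquiv.symm_apply_eq, sigma1_x3]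

lemma sigma1_even (m : ℤ) :
    (sigma1 ^ (2*m)) x1 = cc^m * x1 * (cc^m)⁻¹ ∧
    (sigma1 ^ (2*m)) x2 = cc^m * x2 * (cc^m)⁻¹ := by
  induction m using Int.induction_on with
  | zero => simp
  | succ i ih =>
      have hsplit : (sigma1 ^ (2*((i:ℤ)+1))) = (sigma1 ^ (2:ℤ)) * (sigma1 ^ (2*(i:ℤ))) := by
        rw [← zpow_add]; ring_nf
      constructor
      · rw [hsplit, MulAut.mul_apply, ih.1, _root_.map_mul, _root_.map_mul, _root_.map_inv, _root_.map_zpow,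
          sigma1_sq_cc, sigma1_sq_x1]
        group
      · rw [hsplit, MulAut.mul_apply, ih.2, _root_.map_mul, _root_.map_mul, _root_.map_inv, _root_.map_zpow,
          sigma1_sq_cc, sigma1_sq_x2]
        group
  | pred i ih =>
      have hsplit : (sigma1 ^ (2*(-(i:ℤ)-1))) = (sigma1 ^ (2:ℤ))⁻¹ * (sigma1 ^ (2*(-(i:ℤ)))) := by
        rw [← zpow_neg, ← zpow_add]; ring_nf
      have hsymm : ((sigma1 ^ (2:ℤ))⁻¹ : MulAut F3) = ((sigma1 ^ (2:ℤ)).symm : F3 ≃* F3) := rfl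
      constructor
      · rw [hsplit, MulAut.mul_apply, ih.1]
        rw [show (((sigma1 ^ (2:ℤ))⁻¹ : MulAut F3) (cc^(-(i:ℤ)) * x1 * (cc^(-(i:ℤ)))⁻¹))
            = (sigma1 ^ (2:ℤ)).symm (cc^(-(i:ℤ)) * x1 * (cc^(-(i:ℤ)))⁻¹) from rfl]
        rw [MulEquiv.symm_apply_eq, _root_.map_mul, _root_.map_mul, _root_.map_inv, _root_.map_zpow,
          sigma1_sq_cc, sigma1_sq_x1]
        group
      · rw [hsplit, MulAut.mul_apply, ih.2]
        rw [show (((sigma1 ^ (2:ℤ))⁻¹ : MulAut F3) (cc^(-(i:ℤ)) * x2 * (cc^(-(i:ℤ)))⁻¹))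
            = (sigma1 ^ (2:ℤ)).symm (cc^(-(i:ℤ)) * x2 * (cc^(-(i:ℤ)))⁻¹) from rfl]
        rw [MulEquiv.symm_apply_eq, _root_.map_mul, _root_.map_mul, _root_.map_inv, _root_.map_zpow,
          sigma1_sq_cc, sigma1_sq_x2]
        group

lemma b_even {m : ℤ} (hm : m % 2 = 0) :
    (sigma1 ^ m) x2 = cc^(m/2) * x2 * (cc^(m/2))⁻¹ := by
  have h : 2 * (m/2) = m := by omega
  conv_lhs => rw [← h]
  exact (sigma1_even (m/2)).2

lemma b_odd {m : ℤ} (hm : m % 2 = 1) :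
    (sigma1 ^ m) x2 = cc^(m/2) * x1 * (cc^(m/2))⁻¹ := by
  have h : m = 2 * (m/2) + 1 := by omega
  conv_lhs => rw [h, zpow_add, zpow_one, MulAut.mul_apply, sigma1_x2]
  exact (sigma1_even (m/2)).1

/-- The key commutation step for a "mixed-parity" relation:
if `u` commutes with `C` and `u g u⁻¹ = g⁻¹ C`, then `C u²` commutes with `g`. -/
lemma conj_helper {G : Type*} [Group G] {u C g : G} (hu : u * C = C * u)
    (hstar : u * g * u⁻¹ = g⁻¹ * C) : (C * (u * u)) * g = g * (C * (u * u)) := by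
  have h1 : u * g = g⁻¹ * C * u := by
    calc u * g = (u * g * u⁻¹) * u := by group
    _ = g⁻¹ * C * u := by rw [hstar]
  have h2 : u * g⁻¹ = C⁻¹ * g * u := by
    have h' : u * g⁻¹ * u⁻¹ = C⁻¹ * g := by
      have h'' : (u * g * u⁻¹)⁻¹ = (g⁻¹ * C)⁻¹ := by rw [hstar]
      calc u * g⁻¹ * u⁻¹ = (u * g * u⁻¹)⁻¹ := by group
      _ = (g⁻¹ * C)⁻¹ := h''
      _ = C⁻¹ * g := by group
    calc u * g⁻¹ = (u * g⁻¹ * u⁻¹) * u := by group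
    _ = C⁻¹ * g * u := by rw [h']
  calc C * (u * u) * g = C * u * (u * g) := by group
  _ = C * u * (g⁻¹ * C * u) := by rw [h1]
  _ = C * (u * g⁻¹) * (C * u) := by group
  _ = C * (C⁻¹ * g * u) * (C * u) := by rw [h2]
  _ = g * (u * C) * u := by group
  _ = g * (C * u) * u := by rw [hu]
  _ = g * (C * (u * u)) := by group

/-- if the pairwise differences of the `nᵢ` (`k ≥ 2`) have gcd 1, then
in the quotient of `F3` by the normal closure of the braid relations the images of the
three generators coincide; in particular, the quotient is cyclic. -/
theorem quotient_by_braid_relations_cyclic (k : ℕ) (hk : 2 ≤ k) (n : Fin k → ℤ)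
    (hgcd : ∀ d : ℤ, (∀ i j : Fin k, d ∣ (n i - n j)) → IsUnit d) :
    ((x1 : F3 ⧸ Subgroup.normalClosure (rels k n)) =
        (x2 : F3 ⧸ Subgroup.normalClosure (rels k n)) ∧
      (x2 : F3 ⧸ Subgroup.normalClosure (rels k n)) =
        (x3 : F3 ⧸ Subgroup.normalClosure (rels k n))) ∧
    IsCyclic (F3 ⧸ Subgroup.normalClosure (rels k n)) := by
  haveI : (Subgroup.normalClosure (rels k n)).Normal := Subgroup.normalClosure_normal
  set Q := F3 ⧸ Subgroup.normalClosure (rels k n) with hQ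
  set g : Q := (x1 : Q) with hg
  set H : Q := (x2 : Q) with hH0
  set Z : Q := (x3 : Q) with hZ0
  set C : Q := ((cc : F3) : Q) with hC0
  have hC : C = g * H := by rw [hC0, hg, hH0, cc, QuotientGroup.mk_mul]
  have hH : H = g⁻¹ * C := by rw [hC]; group
  -- the basic relations coming from the generators of the normal closure
  have hrel : ∀ i : Fin k,
      (n i % 2 = 0 → C^(n i/2) * H * (C^(n i/2))⁻¹ = Z) ∧
      (n i % 2 = 1 → C^(n i/2) * g * (C^(n i/2))⁻¹ = Z) := by
    intro i
    have hmem : ((sigma1 ^ (n i)) * sigma2 * (sigma1 ^ (-(n i)))) (of 2) * (of 2)⁻¹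
        ∈ rels k n := ⟨i, 2, rfl⟩
    have happ : ((sigma1 ^ (n i)) * sigma2 * (sigma1 ^ (-(n i)))) (of 2)
        = (sigma1 ^ (n i)) x2 := by
      rw [MulAut.mul_apply, MulAut.mul_apply, show (of 2 : F3) = x3 from rfl,
        sigma1_zpow_x3, sigma2_x3]
    have hone : ((((sigma1 ^ (n i)) * sigma2 * (sigma1 ^ (-(n i)))) (of 2) * (of 2)⁻¹ : F3) : Q)
        = 1 := (QuotientGroup.eq_one_iff _).mpr (Subgroup.subset_normalClosure hmem)
    rw [happ] at hone
    rw [QuotientGroup.mk_mul, QuotientGroup.mk_inv, mul_inv_eq_one] at hone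
    have hone' : (((sigma1 ^ (n i)) x2 : F3) : Q) = Z := by
      rw [hone, hZ0]; rfl
    constructor
    · intro he
      rw [b_even he, QuotientGroup.mk_mul, QuotientGroup.mk_mul, QuotientGroup.mk_inv,
        QuotientGroup.mk_zpow] at hone'
      exact hone'
    · intro ho
      rw [b_odd ho, QuotientGroup.mk_mul, QuotientGroup.mk_mul, QuotientGroup.mk_inv,
        QuotientGroup.mk_zpow] at hone'
      exact hone'
  have hCC : ∀ p : ℤ, Commute (C^p) C := fun p => (Commute.refl C).zpow_left p
  have hHtog : ∀ p : ℤ, Commute (C^p) H → Commute (C^p) g := by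
    intro p hp
    have hgCH : g = C * H⁻¹ := by rw [hC]; group
    rw [hgCH]
    exact (hCC p).mul_right hp.inv_right
  -- the subgroup of "periods"
  let A : AddSubgroup ℤ :=
    { carrier := {p : ℤ | Commute (C ^ p) g}
      zero_mem' := by simp [Set.mem_setOf_eq, Commute.one_left]
      add_mem' := by
        intro p q hp hq
        simp only [Set.mem_setOf_eq] at *
        rw [zpow_add]
        exact hp.mul_left hq
      neg_mem' := by
        intro p hp
        simp only [Set.mem_setOf_eq] at *
        rw [zpow_neg]
        exact hp.inv_left }
  have hmemA : ∀ p : ℤ, p ∈ A ↔ Commute (C ^ p) g := fun p => Iff.rfl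
  -- same-parity relations give periods
  have hA_same : ∀ i j : Fin k, n i % 2 = n j % 2 → (n i / 2 - n j / 2) ∈ A := by
    intro i j hpar
    rcases Int.emod_two_eq (n i) with h0 | h1
    · have hi := (hrel i).1 h0
      have hj := (hrel j).1 (by omega)
      have hconj : C^(n i/2 - n j/2) * H * (C^(n i/2 - n j/2))⁻¹ = H := by
        calc C^(n i/2 - n j/2) * H * (C^(n i/2 - n j/2))⁻¹
            = (C^(n j/2))⁻¹ * (C^(n i/2) * H * (C^(n i/2))⁻¹) * (C^(n j/2)) := by group
        _ = (C^(n j/2))⁻¹ * (C^(n j/2) * H * (C^(n j/2))⁻¹) * (C^(n j/2)) := by rw [hi, hj]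
        _ = H := by group
      refine hHtog _ ?_
      have hcm : C^(n i/2 - n j/2) * H = H * C^(n i/2 - n j/2) := by
        have := congrArg (· * C^(n i/2 - n j/2)) hconj
        simpa [mul_assoc] using this
      exact hcm
    · have hi := (hrel i).2 h1
      have hj := (hrel j).2 (by omega)
      have hconj : C^(n i/2 - n j/2) * g * (C^(n i/2 - n j/2))⁻¹ = g := by
        calc C^(n i/2 - n j/2) * g * (C^(n i/2 - n j/2))⁻¹
            = (C^(n j/2))⁻¹ * (C^(n i/2) * g * (C^(n i/2))⁻¹) * (C^(n j/2)) := by group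
        _ = (C^(n j/2))⁻¹ * (C^(n j/2) * g * (C^(n j/2))⁻¹) * (C^(n j/2)) := by rw [hi, hj]
        _ = g := by group
      have hcm : C^(n i/2 - n j/2) * g = g * C^(n i/2 - n j/2) := by
        have := congrArg (· * C^(n i/2 - n j/2)) hconj
        simpa [mul_assoc] using this
      exact hcm
  -- the mixed-parity "star" relation
  have hstar : ∀ i j : Fin k, n i % 2 = 1 → n j % 2 = 0 →
      C^(n i/2 - n j/2) * g * (C^(n i/2 - n j/2))⁻¹ = g⁻¹ * C := by
    intro i j hi1 hj0
    have hi := (hrel i).2 hi1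
    have hj := (hrel j).1 hj0
    rw [← hH]
    calc C^(n i/2 - n j/2) * g * (C^(n i/2 - n j/2))⁻¹
        = (C^(n j/2))⁻¹ * (C^(n i/2) * g * (C^(n i/2))⁻¹) * (C^(n j/2)) := by group
    _ = (C^(n j/2))⁻¹ * (C^(n j/2) * H * (C^(n j/2))⁻¹) * (C^(n j/2)) := by rw [hi, hj]
    _ = H := by group
  have hA_mixed : ∀ i j : Fin k, n i % 2 = 1 → n j % 2 = 0 → (n i - n j) ∈ A := by
    intro i j hi1 hj0
    have hs := hstar i j hi1 hj0
    have hu : C^(n i/2 - n j/2) * C = C * C^(n i/2 - n j/2) := (hCC _).eq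
    have hcomm := conj_helper hu hs
    have he : C^(n i - n j) = C * (C^(n i/2 - n j/2) * C^(n i/2 - n j/2)) := by
      rw [← zpow_add, ← zpow_one_add]
      congr 1
      omega
    rw [hmemA, Commute, SemiconjBy, he]
    exact hcomm
  -- the gcd argument
  obtain ⟨a, ha⟩ := Int.subgroup_cyclic A
  have hdvd : ∀ p ∈ A, a ∣ p := by
    intro p hp
    rw [ha] at hp
    obtain ⟨t, ht⟩ := AddSubgroup.mem_closure_singleton.mp hp
    exact ⟨t, by rw [← ht, smul_eq_mul, mul_comm]⟩
  have haA : a ∈ A := by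
    rw [ha]
    exact AddSubgroup.mem_closure_singleton.mpr ⟨1, one_smul _ _⟩
  have hadvd : ∀ i j : Fin k, a ∣ n i - n j := by
    intro i j
    rcases Int.emod_two_eq (n i) with h0 | h1 <;> rcases Int.emod_two_eq (n j) with k0 | k1
    · obtain ⟨t, ht⟩ := hdvd _ (hA_same i j (by omega))
      exact ⟨2*t, by rw [show n i - n j = 2*(n i/2 - n j/2) from by omega, ht]; ring⟩
    · obtain ⟨t, ht⟩ := hdvd _ (hA_mixed j i k1 h0)
      exact ⟨-t, by rw [show n i - n j = -(n j - n i) from by ring, ht]; ring⟩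
    · obtain ⟨t, ht⟩ := hdvd _ (hA_mixed i j h1 k0)
      exact ⟨t, ht⟩
    · obtain ⟨t, ht⟩ := hdvd _ (hA_same i j (by omega))
      exact ⟨2*t, by rw [show n i - n j = 2*(n i/2 - n j/2) from by omega, ht]; ring⟩
  have h1A : (1:ℤ) ∈ A := by
    rcases Int.isUnit_iff.mp (hgcd a hadvd) with h | h
    · rw [h] at haA; exact haA
    · rw [h] at haA
      simpa using A.neg_mem haA
  have hCg : Commute C g := by
    have := (hmemA 1).mp h1A
    simpa using this
  -- existence of a mixed pair
  have hmix : ∃ i j : Fin k, n i % 2 = 1 ∧ n j % 2 = 0 := by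
    by_contra hcon
    push_neg at hcon
    have h2 : ∀ i j : Fin k, (2:ℤ) ∣ n i - n j := by
      intro i j
      rcases Int.emod_two_eq (n i) with h0 | h1 <;> rcases Int.emod_two_eq (n j) with k0 | k1
      · omega
      · exact absurd h0 (hcon j i k1)
      · exact absurd k0 (hcon i j h1)
      · omega
    have := hgcd 2 h2
    rw [Int.isUnit_iff] at this
    omega
  obtain ⟨i0, j0, hi0, hj0⟩ := hmix
  -- conclude g = H = Z
  have hs := hstar i0 j0 hi0 hj0
  have hu : Commute (C^(n i0/2 - n j0/2)) g := hCg.zpow_left _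
  have hgg : g = g⁻¹ * C := by
    calc g = C^(n i0/2 - n j0/2) * g * (C^(n i0/2 - n j0/2))⁻¹ := by
          rw [hu.eq]; group
    _ = g⁻¹ * C := hs
  have hgH : g = H := by
    rw [hH]; exact hgg
  have hgZ : g = Z := by
    have hi := (hrel i0).2 hi0
    have hcp := hCg.zpow_left (n i0 / 2)
    calc g = C^(n i0/2) * g * (C^(n i0/2))⁻¹ := by rw [hcp.eq]; group
    _ = Z := hi
  refine ⟨⟨hgH, hgH ▸ hgZ⟩, ?_⟩
  -- cyclicity
  refine ⟨⟨g, fun z => ?_⟩⟩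
  induction z using QuotientGroup.induction_on with
  | H w =>
    induction w using FreeGroup.induction_on with
    | C1 => exact ⟨0, by simp⟩
    | of x =>
        have hx : ((of x : F3) : Q) = g := by
          fin_cases x
          · rfl
          · exact hgH.symm
          · exact hgZ.symm
        rw [hx]
        exact Subgroup.mem_zpowers g
    | inv_of x hx =>
        rw [QuotientGroup.mk_inv]
        exact (Subgroup.zpowers g).inv_mem hx
    | mul x y hx hy =>
        rw [QuotientGroup.mk_mul]
        exact (Subgroup.zpowers g).mul_mem hx hy
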